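/- Let Ω be a finite set and let μ be a determinantal probability measure on the subsets of Ω whose kernel K is symmetric with all eigenvalues in [0,1]. Then for every subset A ⊆ Ω, all eigenvalues λ_1,…,λ_m (m=|A|, with multiplicity) of the principal submatrix K_A lie in [0,1], for every real z one has E_μ[z^{|𝒯∩A|}] = ∏_{i=1}^m (z·λ_i + (1−λ_i)), and consequently the number of points |𝒯∩A| has the distribution of a sum of m independent Bernoulli random variables with parameters λ_1,…,λ_m: for every integer n, μ{|𝒯∩A| = n} = ∑_{S⊆{1,…,m}, |S|=n} ∏_{i∈S} λ_i ∏_{i∉S} (1−λ_i). -/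

import Mathlib

/-!
Statement 11: For a determinantal probability measure μ whose kernel K is
symmetric with all eigenvalues in [0,1]: all eigenvalues λ_1,…,λ_m of K_A lie
in [0,1], E_μ[z^{|𝒯∩A|}] = ∏ (z·λ_i + (1−λ_i)), and |𝒯∩A| is distributed as a
sum of m independent Bernoulli(λ_i) random variables.
-/

open Finset

variable {α : Type*} [Fintype α] [DecidableEq α]

/-- The determinant of the principal submatrix of `K` with rows and columns
indexed by the finite set `S`. -/
noncomputable def detSub (K : Matrix α α ℝ) (S : Finset α) : ℝ :=
  Matrix.det (K.submatrix (fun i : {x : α // x ∈ S} => (i : α))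
    (fun j : {x : α // x ∈ S} => (j : α)))

/-- `μ` is a probability measure on the power set of `α`. -/
def IsProbMeasure (μ : Finset α → ℝ) : Prop :=
  (∀ T, 0 ≤ μ T) ∧ (∑ T : Finset α, μ T) = 1

/-- `μ` is determinantal with kernel `K`:
`μ {T : S ⊆ T} = det K_S` for every `S ⊆ Ω`. -/
def IsDeterminantal (μ : Finset α → ℝ) (K : Matrix α α ℝ) : Prop :=
  ∀ S : Finset α, (∑ T : Finset α, if S ⊆ T then μ T else 0) = detSub K S

section AuxLemmas

open Matrix Polynomial

set_option linter.unusedSectionVars false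

variable {n : Type*} [Fintype n] [DecidableEq n]

/-- det of `c•1 + d•M` for hermitian real `M` as product over eigenvalues. -/
lemma herm_det_aux (M : Matrix n n ℝ) (hM : M.IsHermitian) (c d : ℝ) :
    (c • (1 : Matrix n n ℝ) + d • M).det = ∏ i, (c + d * hM.eigenvalues i) := by
  set U : Matrix n n ℝ := (hM.eigenvectorUnitary : Matrix n n ℝ) with hU
  have hUU : U * star U = 1 := (Matrix.mem_unitaryGroup_iff).mp hM.eigenvectorUnitary.2
  have hD : c • (1 : Matrix n n ℝ) + d • M
      = U * (c • (1 : Matrix n n ℝ) + d • diagonal (RCLike.ofReal ∘ hM.eigenvalues)) * star U := by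
    rw [mul_add, add_mul]
    rw [mul_smul_comm, mul_smul_comm, smul_mul_assoc, smul_mul_assoc, mul_one, hUU]
    conv_lhs => rw [hM.spectral_theorem]
    rfl
  rw [hD, det_mul, det_mul, mul_comm (U.det), mul_assoc, ← det_mul, hUU, det_one, mul_one]
  have : c • (1 : Matrix n n ℝ) + d • diagonal (RCLike.ofReal ∘ hM.eigenvalues)
      = diagonal (fun i => c + d * hM.eigenvalues i) := by
    rw [smul_one_eq_diagonal, ← diagonal_smul, ← diagonal_add]
    congr 1
  rw [this, det_diagonal]

/-- charpoly of a hermitian real matrix. -/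
lemma herm_charpoly (M : Matrix n n ℝ) (hM : M.IsHermitian) :
    M.charpoly = ∏ i, (X - C (hM.eigenvalues i)) := by
  apply Polynomial.funext
  intro t
  have h1 : eval t M.charpoly = (t • (1 : Matrix n n ℝ) - M).det := by
    rw [Matrix.charpoly, eval_det, matPolyEquiv_charmatrix]
    simp only [smul_one_eq_diagonal, Matrix.scalar]
    congr 1
    simp [eval_sub, eval_X, eval_C]
  have h2 : (t • (1 : Matrix n n ℝ) - M).det = ∏ i, (t - hM.eigenvalues i) := by
    have := herm_det_aux M hM t (-1)
    simp only [neg_one_smul] at this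
    rw [sub_eq_add_neg, this]
    exact Finset.prod_congr rfl fun i _ => by ring
  rw [h1, h2, eval_prod]
  exact (Finset.prod_congr rfl fun i _ => by simp).symm

lemma det_piecewise (N : Matrix n n ℝ) (s : Finset n) :
    Matrix.det (Matrix.of (s.piecewise (fun i => N i) (fun i => (1 : Matrix n n ℝ) i)))
      = (N.submatrix (fun i : {x // x ∈ s} => (i : n)) (fun j : {x // x ∈ s} => (j : n))).det := by
  set P : Matrix n n ℝ := Matrix.of (s.piecewise (fun i => N i) (fun i => (1 : Matrix n n ℝ) i))
  set e : {x // x ∈ s} ⊕ {x // ¬ x ∈ s} ≃ n := Equiv.sumCompl (· ∈ s)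
  have h1 : P.det = (P.submatrix e e).det := (Matrix.det_submatrix_equiv_self e P).symm
  have h2 : P.submatrix e e = Matrix.fromBlocks
      (N.submatrix (fun i : {x // x ∈ s} => (i : n)) (fun j : {x // x ∈ s} => (j : n)))
      (N.submatrix (fun i : {x // x ∈ s} => (i : n)) (fun j : {x // ¬ x ∈ s} => (j : n)))
      0 (1 : Matrix {x // ¬ x ∈ s} {x // ¬ x ∈ s} ℝ) := by
    ext i j
    cases i with
    | inl i =>
      cases j with
      | inl j =>
        simp only [submatrix_apply, Equiv.sumCompl_apply_inl, fromBlocks_apply₁₁]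
        show P (i : n) (j : n) = N (i : n) (j : n)
        simp [P, Finset.piecewise, i.2]
      | inr j =>
        simp only [submatrix_apply, Equiv.sumCompl_apply_inl, Equiv.sumCompl_apply_inr,
          fromBlocks_apply₁₂]
        show P (i : n) (j : n) = N (i : n) (j : n)
        simp [P, Finset.piecewise, i.2]
    | inr i =>
      cases j with
      | inl j =>
        simp only [submatrix_apply, Equiv.sumCompl_apply_inl, Equiv.sumCompl_apply_inr,
          fromBlocks_apply₂₁, Matrix.zero_apply]
        show P (i : n) (j : n) = 0
        have hij : (i : n) ≠ (j : n) := fun h => i.2 (h ▸ j.2)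
        simp [P, Finset.piecewise, i.2, Matrix.one_apply, hij]
      | inr j =>
        simp only [submatrix_apply, Equiv.sumCompl_apply_inr, fromBlocks_apply₂₂]
        show P (i : n) (j : n) = (1 : Matrix {x // ¬ x ∈ s} {x // ¬ x ∈ s} ℝ) i j
        simp [P, Finset.piecewise, i.2, Matrix.one_apply, Subtype.ext_iff]
  rw [h1, h2, Matrix.det_fromBlocks_zero₂₁, Matrix.det_one, mul_one]

lemma det_one_add_expand (N : Matrix n n ℝ) :
    (1 + N).det = ∑ s : Finset n,
      (N.submatrix (fun i : {x // x ∈ s} => (i : n)) (fun j : {x // x ∈ s} => (j : n))).det := by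
  have h0 : (1 + N).det = (N + 1).det := by rw [add_comm]
  have h1 : (N + 1).det
      = ∑ s : Finset n, Matrix.det (Matrix.of (s.piecewise (fun i => N i)
          (fun i => (1 : Matrix n n ℝ) i))) := by
    have := (Matrix.detRowAlternating (n := n) (R := ℝ)).toMultilinearMap.map_add_univ
      (fun i => N i) (fun i => (1 : Matrix n n ℝ) i)
    exact this
  rw [h0, h1]
  exact Finset.sum_congr rfl fun s _ => det_piecewise N s

end AuxLemmas

section AuxLemmas2

open Matrix Polynomial

set_option linter.unusedSectionVars false

lemma isHermitian_of_isSymm (K : Matrix α α ℝ) (h : K.IsSymm) : K.IsHermitian := by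
  rw [Matrix.IsHermitian, Matrix.conjTranspose]
  ext i j
  simpa using congrFun (congrFun h i) j

/-- From the eigenvalue hypothesis, the quadratic form of `K` is between `0` and `‖x‖²`. -/
lemma quad_form_bounds (K : Matrix α α ℝ) (hsymm : K.IsSymm)
    (heig : ∀ (t : ℝ) (x : α → ℝ), x ≠ 0 → K.mulVec x = t • x → 0 ≤ t ∧ t ≤ 1)
    (x : α → ℝ) : 0 ≤ x ⬝ᵥ K.mulVec x ∧ x ⬝ᵥ K.mulVec x ≤ x ⬝ᵥ x := by
  have hK : K.IsHermitian := isHermitian_of_isSymm K hsymm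
  have hK1 : (1 - K).IsHermitian := (Matrix.isHermitian_one).sub hK
  have hpos : K.PosSemidef := by
    rw [hK.posSemidef_iff_eigenvalues_nonneg]
    intro i
    have hv := hK.mulVec_eigenvectorBasis i
    have hnz : (WithLp.equiv 2 _) (hK.eigenvectorBasis i) ≠ 0 := by
      have := hK.eigenvectorBasis.orthonormal.ne_zero i
      simpa [WithLp.equiv] using this
    exact (heig _ _ hnz hv).1
  have hpos1 : (1 - K).PosSemidef := by
    rw [hK1.posSemidef_iff_eigenvalues_nonneg]
    intro i
    have hv := hK1.mulVec_eigenvectorBasis i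
    have hnz : (WithLp.equiv 2 _) (hK1.eigenvectorBasis i) ≠ 0 := by
      have := hK1.eigenvectorBasis.orthonormal.ne_zero i
      simpa [WithLp.equiv] using this
    set v := (hK1.eigenvectorBasis i).ofLp
    have hv' : K.mulVec v = (1 - hK1.eigenvalues i) • v := by
      have heq : (1 - K).mulVec v = v - K.mulVec v := by
        rw [Matrix.sub_mulVec, Matrix.one_mulVec]
      rw [heq] at hv
      rw [sub_smul, one_smul, ← hv]
      abel
    have := (heig _ _ hnz hv').2
    exact (by linarith : (0:ℝ) ≤ hK1.eigenvalues i)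
  constructor
  · have := hpos.dotProduct_mulVec_nonneg x
    simpa using this
  · have := hpos1.dotProduct_mulVec_nonneg x
    simp only [Matrix.sub_mulVec, Matrix.one_mulVec, dotProduct_sub, star_trivial] at this
    linarith

lemma subm_eig_bounds (K : Matrix α α ℝ)
    (hq : ∀ x : α → ℝ, 0 ≤ x ⬝ᵥ K.mulVec x ∧ x ⬝ᵥ K.mulVec x ≤ x ⬝ᵥ x)
    (A : Finset α) (t : ℝ) (v : {x // x ∈ A} → ℝ) (hv : v ≠ 0)
    (hKv : (K.submatrix (fun i : {x // x ∈ A} => (i : α))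
      (fun j : {x // x ∈ A} => (j : α))).mulVec v = t • v) :
    0 ≤ t ∧ t ≤ 1 := by
  classical
  set x : α → ℝ := fun a => if h : a ∈ A then v ⟨a, h⟩ else 0 with hx
  have hx0 : ∀ a ∉ A, x a = 0 := fun a ha => by simp [hx, ha]
  have hrestrict : ∀ (g : α → ℝ), ∑ a, x a * g a = ∑ i : {x // x ∈ A}, v i * g i := by
    intro g
    have h1 : ∑ a, x a * g a = ∑ a ∈ A, x a * g a :=
      (Finset.sum_subset (Finset.subset_univ A) (fun a _ ha => by simp [hx0 a ha])).symm
    rw [h1, ← Finset.sum_coe_sort A (fun a => x a * g a)]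
    exact Finset.sum_congr rfl fun i _ => by simp [hx, i.2]
  have hmul : ∀ i : {x // x ∈ A}, (K.mulVec x) i = ((K.submatrix
      (fun i : {x // x ∈ A} => (i : α)) (fun j : {x // x ∈ A} => (j : α))).mulVec v) i := by
    intro i
    simp only [Matrix.mulVec, dotProduct, Matrix.submatrix_apply]
    have h1 : ∑ b, K (i : α) b * x b = ∑ b ∈ A, K (i : α) b * x b :=
      (Finset.sum_subset (Finset.subset_univ A) (fun b _ hb => by simp [hx0 b hb])).symm
    rw [h1, ← Finset.sum_coe_sort A (fun b => K (i : α) b * x b)]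
    exact Finset.sum_congr rfl fun j _ => by simp [hx, j.2]
  have hdot1 : x ⬝ᵥ K.mulVec x = t * (v ⬝ᵥ v) := by
    rw [dotProduct, hrestrict (fun a => K.mulVec x a)]
    have : ∑ i : {x // x ∈ A}, v i * (K.mulVec x) i = ∑ i : {x // x ∈ A}, v i * (t • v) i := by
      refine Finset.sum_congr rfl fun i _ => ?_
      rw [hmul i, hKv]
    rw [this]
    simp [dotProduct, Finset.mul_sum]
    exact Finset.sum_congr rfl fun i _ => by ring
  have hdot2 : x ⬝ᵥ x = v ⬝ᵥ v := by
    rw [dotProduct, hrestrict (fun a => x a)]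
    refine Finset.sum_congr rfl fun i _ => by simp [hx, i.2]
  have hvv : 0 < v ⬝ᵥ v := by
    rcases lt_or_eq_of_le (Finset.sum_nonneg fun i _ => mul_self_nonneg (v i)) with h | h
    · exact h
    · exfalso; apply hv
      have : v ⬝ᵥ v = 0 := h.symm
      exact (dotProduct_self_eq_zero).mp this
  have h1 := (hq x).1
  have h2 := (hq x).2
  rw [hdot1] at h1 h2
  rw [hdot2] at h2
  constructor
  · by_contra h
    push_neg at h
    nlinarith
  · nlinarith

lemma detSub_map_eq (K : Matrix α α ℝ) (A : Finset α) (s : Finset {x : α // x ∈ A}) :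
    (((K.submatrix (fun i : {x // x ∈ A} => (i : α)) (fun j : {x // x ∈ A} => (j : α))).submatrix
      (fun i : {y // y ∈ s} => (i : {x // x ∈ A})) (fun j : {y // y ∈ s} => (j : {x // x ∈ A}))).det)
    = detSub K (s.map (Function.Embedding.subtype _)) := by
  rw [Matrix.submatrix_submatrix]
  set S := s.map (Function.Embedding.subtype fun x => x ∈ A) with hS
  have hmem : ∀ y : {y // y ∈ s}, ((y : {x // x ∈ A}) : α) ∈ S := by
    intro y
    rw [hS, Finset.mem_map]
    exact ⟨↑y, y.2, rfl⟩
  set f : {y // y ∈ s} → {x : α // x ∈ S} := fun y => ⟨((y : {x // x ∈ A}) : α), hmem y⟩ with hf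
  have hbij : Function.Bijective f := by
    constructor
    · intro a b hab
      have h2 : ((↑a : {x // x ∈ A}) : α) = ((↑b : {x // x ∈ A}) : α) :=
        congrArg (Subtype.val : {x : α // x ∈ S} → α) hab
      exact Subtype.ext (Subtype.ext h2)
    · intro z
      obtain ⟨y, hy, hyz⟩ := Finset.mem_map.mp z.2
      exact ⟨⟨y, hy⟩, Subtype.ext hyz⟩
  set e := Equiv.ofBijective f hbij
  rw [detSub, ← Matrix.det_submatrix_equiv_self e
    (K.submatrix (fun i : {x : α // x ∈ S} => (i : α)) (fun j : {x : α // x ∈ S} => (j : α)))]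
  rw [Matrix.submatrix_submatrix]
  rfl

lemma sum_finset_subtype_eq (A : Finset α) (F : Finset α → ℝ) :
    ∑ s : Finset {x : α // x ∈ A}, F (s.map (Function.Embedding.subtype _))
      = ∑ S ∈ A.powerset, F S := by
  classical
  refine Finset.sum_bij (fun s _ => s.map (Function.Embedding.subtype _)) ?_ ?_ ?_ ?_
  · intro s _
    rw [Finset.mem_powerset]
    intro a ha
    rw [Finset.mem_map] at ha
    obtain ⟨y, _, rfl⟩ := ha
    exact y.2
  · intro a _ b _ hab
    exact Finset.map_injective _ hab
  · intro S hS
    rw [Finset.mem_powerset] at hS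
    refine ⟨S.subtype (· ∈ A), Finset.mem_univ _, ?_⟩
    rw [Finset.subtype_map]
    exact Finset.filter_true_of_mem fun a ha => hS ha
  · intro s _
    rfl

lemma prod_ite_subset (z : ℝ) (T t : Finset α) :
    (∏ i ∈ t, if i ∈ T then (z - 1) else 0) = if t ⊆ T then (z - 1) ^ t.card else 0 := by
  by_cases h : t ⊆ T
  · rw [if_pos h, Finset.prod_congr rfl (fun i hi => if_pos (h hi)), Finset.prod_const]
  · rw [if_neg h]
    obtain ⟨i, hit, hiT⟩ := Finset.not_subset.mp h
    exact Finset.prod_eq_zero hit (if_neg hiT)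

lemma pow_card_inter (z : ℝ) (T A : Finset α) :
    z ^ (T ∩ A).card = ∑ S ∈ A.powerset, (if S ⊆ T then (z - 1) ^ S.card else 0) := by
  have h1 : z ^ (T ∩ A).card = ∏ i ∈ A, (if i ∈ T then z else 1) := by
    rw [Finset.prod_ite, Finset.prod_const, Finset.prod_const_one, mul_one,
      Finset.filter_mem_eq_inter, Finset.inter_comm]
  have h2 : ∀ i, (if i ∈ T then z else 1) = (if i ∈ T then (z - 1) else 0) + 1 := by
    intro i; split_ifs <;> ring
  rw [h1, Finset.prod_congr rfl (fun i _ => h2 i), Finset.prod_add]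
  refine Finset.sum_congr rfl fun S _ => ?_
  rw [Finset.prod_const_one, mul_one, prod_ite_subset]

end AuxLemmas2

open Matrix Polynomial in
/-- The number of points of a symmetric determinantal process in a
set `A` is a sum of independent Bernoullis, with parameters the eigenvalues of `K_A`. -/
theorem count_is_sum_of_bernoullis
    (μ : Finset α → ℝ) (K : Matrix α α ℝ)
    (hsymm : K.IsSymm)
    (heig : ∀ (t : ℝ) (x : α → ℝ), x ≠ 0 → K.mulVec x = t • x → 0 ≤ t ∧ t ≤ 1)
    (hprob : IsProbMeasure μ) (hdet : IsDeterminantal μ K)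
    (A : Finset α) :
    ∃ lam : Fin A.card → ℝ,
      -- the eigenvalues (with multiplicity) of `K_A`, all lying in `[0,1]`
      (∀ i, 0 ≤ lam i ∧ lam i ≤ 1) ∧
      (Matrix.charpoly (K.submatrix (fun i : {x : α // x ∈ A} => (i : α))
          (fun j : {x : α // x ∈ A} => (j : α)))
        = ∏ i : Fin A.card, (Polynomial.X - Polynomial.C (lam i))) ∧
      -- generating function
      (∀ z : ℝ, (∑ T : Finset α, μ T * z ^ (T ∩ A).card)
        = ∏ i : Fin A.card, (z * lam i + (1 - lam i))) ∧
      -- Bernoulli-sum distribution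
      (∀ n : ℕ, (∑ T : Finset α, if (T ∩ A).card = n then μ T else 0)
        = ∑ S ∈ Finset.univ.filter (fun S : Finset (Fin A.card) => S.card = n),
            (∏ i ∈ S, lam i) * ∏ i ∈ Sᶜ, (1 - lam i)) := by
  classical
  have hK : K.IsHermitian := isHermitian_of_isSymm K hsymm
  set KA : Matrix {x : α // x ∈ A} {x : α // x ∈ A} ℝ :=
    K.submatrix (fun i : {x : α // x ∈ A} => (i : α)) (fun j : {x : α // x ∈ A} => (j : α))
    with hKAdef
  have hKA : KA.IsHermitian := hK.submatrix _
  have hq := quad_form_bounds K hsymm heig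
  set e : Fin A.card ≃ {x : α // x ∈ A} := A.equivFin.symm with he
  set lam : Fin A.card → ℝ := fun i => hKA.eigenvalues (e i) with hlam
  -- eigenvalue bounds
  have hbounds : ∀ j : {x : α // x ∈ A}, 0 ≤ hKA.eigenvalues j ∧ hKA.eigenvalues j ≤ 1 := by
    intro j
    have hv := hKA.mulVec_eigenvectorBasis j
    have hnz : (WithLp.equiv 2 _) (hKA.eigenvectorBasis j) ≠ 0 := by
      have := hKA.eigenvectorBasis.orthonormal.ne_zero j
      simpa [WithLp.equiv] using this
    exact subm_eig_bounds K hq A _ _ hnz hv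
  -- generating function
  have hgen : ∀ z : ℝ, (∑ T : Finset α, μ T * z ^ (T ∩ A).card)
      = ∏ i : Fin A.card, (z * lam i + (1 - lam i)) := by
    intro z
    have step1 : (∑ T : Finset α, μ T * z ^ (T ∩ A).card)
        = ∑ S ∈ A.powerset, (z - 1) ^ S.card * detSub K S := by
      have hterm : ∀ T, μ T * z ^ (T ∩ A).card
          = ∑ S ∈ A.powerset, (z - 1) ^ S.card * (if S ⊆ T then μ T else 0) := by
        intro T
        rw [pow_card_inter z T A, Finset.mul_sum]
        refine Finset.sum_congr rfl fun S _ => ?_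
        split_ifs <;> ring
      rw [Finset.sum_congr rfl fun T _ => hterm T, Finset.sum_comm]
      refine Finset.sum_congr rfl fun S _ => ?_
      rw [← Finset.mul_sum, hdet S]
    have step2 : ∑ S ∈ A.powerset, (z - 1) ^ S.card * detSub K S
        = ∑ s : Finset {x : α // x ∈ A}, (z - 1) ^ s.card *
            ((KA.submatrix (fun i : {y // y ∈ s} => (i : {x : α // x ∈ A}))
              (fun j : {y // y ∈ s} => (j : {x : α // x ∈ A}))).det) := by
      rw [← sum_finset_subtype_eq A (fun S => (z - 1) ^ S.card * detSub K S)]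
      refine Finset.sum_congr rfl fun s _ => ?_
      rw [Finset.card_map, detSub_map_eq]
    have step3 : ∑ s : Finset {x : α // x ∈ A}, (z - 1) ^ s.card *
            ((KA.submatrix (fun i : {y // y ∈ s} => (i : {x : α // x ∈ A}))
              (fun j : {y // y ∈ s} => (j : {x : α // x ∈ A}))).det)
        = (1 + (z - 1) • KA).det := by
      rw [det_one_add_expand ((z - 1) • KA)]
      refine Finset.sum_congr rfl fun s _ => ?_
      have : ((z - 1) • KA).submatrix (fun i : {y // y ∈ s} => (i : {x : α // x ∈ A}))
          (fun j : {y // y ∈ s} => (j : {x : α // x ∈ A}))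
          = (z - 1) • (KA.submatrix (fun i : {y // y ∈ s} => (i : {x : α // x ∈ A}))
            (fun j : {y // y ∈ s} => (j : {x : α // x ∈ A}))) := rfl
      rw [this, Matrix.det_smul, Fintype.card_coe]
    have step4 : (1 + (z - 1) • KA).det
        = ∏ j : {x : α // x ∈ A}, (1 + (z - 1) * hKA.eigenvalues j) := by
      have := herm_det_aux KA hKA 1 (z - 1)
      rwa [one_smul] at this
    rw [step1, step2, step3, step4,
      ← Equiv.prod_comp e (fun j => 1 + (z - 1) * hKA.eigenvalues j)]
    exact (Finset.prod_congr rfl fun i _ => by simp only [hlam]; ring).symm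
  refine ⟨lam, fun i => hbounds (e i), ?_, hgen, ?_⟩
  · rw [herm_charpoly KA hKA]
    exact (Equiv.prod_comp e (fun j => X - C (hKA.eigenvalues j))).symm
  · intro n
    set P : ℝ[X] := ∑ T : Finset α, C (μ T) * X ^ (T ∩ A).card with hP
    set Q : ℝ[X] := ∑ S : Finset (Fin A.card),
      C ((∏ i ∈ S, lam i) * ∏ i ∈ Sᶜ, (1 - lam i)) * X ^ S.card with hQ
    have hPQ : P = Q := by
      apply Polynomial.funext
      intro z
      have hPe : eval z P = ∑ T : Finset α, μ T * z ^ (T ∩ A).card := by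
        rw [hP, Polynomial.eval_finset_sum]
        exact Finset.sum_congr rfl fun T _ => by
          rw [eval_mul, eval_C, eval_pow, eval_X]
      have hQe : eval z Q = ∑ S : Finset (Fin A.card),
          ((∏ i ∈ S, lam i) * ∏ i ∈ Sᶜ, (1 - lam i)) * z ^ S.card := by
        rw [hQ, Polynomial.eval_finset_sum]
        exact Finset.sum_congr rfl fun S _ => by
          rw [eval_mul, eval_C, eval_pow, eval_X]
      rw [hPe, hQe, hgen z]
      have hfac : ∀ i : Fin A.card, z * lam i + (1 - lam i)
          = (fun i => lam i * z) i + (fun i => (1 - lam i)) i := fun i => by ring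
      rw [Finset.prod_congr rfl fun i _ => hfac i, Fintype.prod_add]
      refine Finset.sum_congr rfl fun S _ => ?_
      rw [Finset.prod_mul_distrib, Finset.prod_const]
      ring
    have hcoeffP : P.coeff n = ∑ T : Finset α, if (T ∩ A).card = n then μ T else 0 := by
      rw [hP, Polynomial.finset_sum_coeff]
      refine Finset.sum_congr rfl fun T _ => ?_
      rw [Polynomial.coeff_C_mul, Polynomial.coeff_X_pow]
      by_cases h : (T ∩ A).card = n
      · simp [h]
      · simp [h, Ne.symm h]
    have hcoeffQ : Q.coeff n = ∑ S ∈ Finset.univ.filter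
        (fun S : Finset (Fin A.card) => S.card = n),
          (∏ i ∈ S, lam i) * ∏ i ∈ Sᶜ, (1 - lam i) := by
      rw [hQ, Polynomial.finset_sum_coeff, Finset.sum_filter]
      refine Finset.sum_congr rfl fun S _ => ?_
      rw [Polynomial.coeff_C_mul, Polynomial.coeff_X_pow]
      by_cases h : S.card = n
      · simp [h]
      · simp [h, Ne.symm h]
    rw [← hcoeffP, ← hcoeffQ, hPQ]
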